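/- Consider the piecewise-linear oscillator ü + ω₀²u + ε·u_+ = 0 with ω₀ > 0 and ε > 0. Every nontrivial solution is periodic with period P(ε) = (π/ω₀)·(1 + (1 + ε/ω₀²)^{−1/2}), independent of the amplitude; equivalently the angular frequency is ω(ε) = 2π/P(ε) = 2ω₀/(1 + (1 + ε/ω₀²)^{−1/2}). -/

import Mathlib

open Real Set

noncomputable def oscF (ω₀ ε : ℝ) : ℝ × ℝ → ℝ × ℝ :=
  fun p => (p.2, -(ω₀ ^ 2 * p.1 + ε * max p.1 0))

lemma oscF_lipschitz (ω₀ ε : ℝ) (hω : 0 ≤ ω₀) (hε : 0 ≤ ε) :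
    LipschitzWith ⟨1 + ω₀ ^ 2 + ε, by positivity⟩ (oscF ω₀ ε) := by
  apply LipschitzWith.of_dist_le_mul
  intro p q
  have hd1 : |p.1 - q.1| ≤ |p.1 - q.1| ⊔ |p.2 - q.2| := le_max_left _ _
  have hd2 : |p.2 - q.2| ≤ |p.1 - q.1| ⊔ |p.2 - q.2| := le_max_right _ _
  have hd0 : (0:ℝ) ≤ |p.1 - q.1| ⊔ |p.2 - q.2| := le_trans (abs_nonneg _) hd1
  simp only [oscF, Prod.dist_eq, Real.dist_eq, NNReal.coe_mk, max_le_iff]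
  change _ ≤ (1 + ω₀ ^ 2 + ε) * _ ∧ _ ≤ (1 + ω₀ ^ 2 + ε) * _
  refine ⟨?_, ?_⟩
  · nlinarith [sq_nonneg ω₀]
  · 
    have h1 : |max p.1 0 - max q.1 0| ≤ |p.1 - q.1| := abs_max_sub_max_le_abs _ _ _
    have h2 : |(-(ω₀ ^ 2 * p.1 + ε * max p.1 0)) - (-(ω₀ ^ 2 * q.1 + ε * max q.1 0))|
        ≤ ω₀ ^ 2 * |p.1 - q.1| + ε * |max p.1 0 - max q.1 0| := by
      have he : (-(ω₀ ^ 2 * p.1 + ε * max p.1 0)) - (-(ω₀ ^ 2 * q.1 + ε * max q.1 0))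
          = ω₀ ^ 2 * (q.1 - p.1) + ε * (max q.1 0 - max p.1 0) := by ring
      rw [he]
      calc |ω₀ ^ 2 * (q.1 - p.1) + ε * (max q.1 0 - max p.1 0)|
          ≤ |ω₀ ^ 2 * (q.1 - p.1)| + |ε * (max q.1 0 - max p.1 0)| := abs_add_le _ _
        _ = ω₀ ^ 2 * |q.1 - p.1| + ε * |max q.1 0 - max p.1 0| := by
            rw [abs_mul, abs_mul, abs_of_nonneg (by positivity : (0:ℝ) ≤ ω₀ ^ 2),
              abs_of_nonneg hε]
        _ = ω₀ ^ 2 * |p.1 - q.1| + ε * |max p.1 0 - max q.1 0| := by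
            rw [abs_sub_comm q.1, abs_sub_comm (max q.1 0)]
    nlinarith [abs_nonneg (p.1 - q.1), sq_nonneg ω₀,
      abs_nonneg (max p.1 0 - max q.1 0)]

lemma ode_global_eq {K : NNReal} {v : ℝ × ℝ → ℝ × ℝ} (hv : LipschitzWith K v)
    {f g : ℝ → ℝ × ℝ}
    (hf : ∀ t, HasDerivAt f (v (f t)) t) (hg : ∀ t, HasDerivAt g (v (g t)) t)
    {t₀ : ℝ} (heq : f t₀ = g t₀) (t : ℝ) : f t = g t := by
  have h := ODE_solution_unique_of_mem_Icc (v := fun _ => v) (s := fun _ => univ)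
    (K := K) (a := min t t₀ - 1) (b := max t t₀ + 1) (t₀ := t₀)
    (fun _ _ => hv.lipschitzOnWith (s := univ))
    ⟨by nlinarith [min_le_right t t₀, le_max_right t t₀], by
      nlinarith [min_le_right t t₀, le_max_right t t₀]⟩
    (Continuous.continuousOn (continuous_iff_continuousAt.2 fun s => (hf s).continuousAt))
    (fun s _ => hf s) (fun _ _ => trivial)
    (Continuous.continuousOn (continuous_iff_continuousAt.2 fun s => (hg s).continuousAt))
    (fun s _ => hg s) (fun _ _ => trivial) heq
  exact h ⟨by nlinarith [min_le_left t t₀, le_max_left t t₀],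
    by nlinarith [min_le_left t t₀, le_max_left t t₀]⟩

lemma pair1_hasDeriv (c Ω t₀ : ℝ) (hΩ : Ω ≠ 0) (t : ℝ) :
    HasDerivAt (fun t => ((c / Ω) * Real.sin (Ω * (t - t₀)), c * Real.cos (Ω * (t - t₀))))
      (c * Real.cos (Ω * (t - t₀)), -(c * Ω) * Real.sin (Ω * (t - t₀))) t := by
  have hin : HasDerivAt (fun t : ℝ => Ω * (t - t₀)) Ω t := by
    simpa using ((hasDerivAt_id t).sub_const t₀).const_mul Ω
  have h1 : HasDerivAt (fun t => (c / Ω) * Real.sin (Ω * (t - t₀)))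
      ((c / Ω) * (Real.cos (Ω * (t - t₀)) * Ω)) t :=
    ((Real.hasDerivAt_sin _).comp t hin).const_mul (c / Ω)
  have h2 : HasDerivAt (fun t => c * Real.cos (Ω * (t - t₀)))
      (c * (-Real.sin (Ω * (t - t₀)) * Ω)) t :=
    ((Real.hasDerivAt_cos _).comp t hin).const_mul c
  convert h1.prodMk h2 using 2
  · field_simp
  · ring

lemma pair2_hasDeriv (a b Ω : ℝ) (hΩ : Ω ≠ 0) (t : ℝ) :
    HasDerivAt (fun t => (a * Real.cos (Ω * t) + (b / Ω) * Real.sin (Ω * t),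
        -(a * Ω) * Real.sin (Ω * t) + b * Real.cos (Ω * t)))
      (-(a * Ω) * Real.sin (Ω * t) + b * Real.cos (Ω * t),
        -(Ω ^ 2) * (a * Real.cos (Ω * t) + (b / Ω) * Real.sin (Ω * t))) t := by
  have hin : HasDerivAt (fun t : ℝ => Ω * t) Ω t := by
    simpa using (hasDerivAt_id t).const_mul Ω
  have h1 : HasDerivAt (fun t => a * Real.cos (Ω * t) + (b / Ω) * Real.sin (Ω * t))
      (a * (-Real.sin (Ω * t) * Ω) + (b / Ω) * (Real.cos (Ω * t) * Ω)) t :=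
    (((Real.hasDerivAt_cos _).comp t hin).const_mul a).add
      (((Real.hasDerivAt_sin _).comp t hin).const_mul (b / Ω))
  have h2 : HasDerivAt (fun t => -(a * Ω) * Real.sin (Ω * t) + b * Real.cos (Ω * t))
      (-(a * Ω) * (Real.cos (Ω * t) * Ω) + b * (-Real.sin (Ω * t) * Ω)) t :=
    (((Real.hasDerivAt_sin _).comp t hin).const_mul (-(a * Ω))).add
      (((Real.hasDerivAt_cos _).comp t hin).const_mul b)
  convert h1.prodMk h2 using 2
  · field_simp
  · field_simp; ring

lemma osc_step (ω₀ ε : ℝ) (hω : 0 < ω₀) (hε : 0 < ε) (u u' : ℝ → ℝ)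
    (hu : ∀ t, HasDerivAt u (u' t) t)
    (hu' : ∀ t, HasDerivAt u' (-(ω₀ ^ 2 * u t + ε * max (u t) 0)) t)
    (t₀ c Ω : ℝ) (hΩ : 0 < Ω)
    (hfield : ∀ s ∈ Ico (0:ℝ) π,
      ω₀ ^ 2 * ((c / Ω) * Real.sin s) + ε * max ((c / Ω) * Real.sin s) 0
        = Ω ^ 2 * ((c / Ω) * Real.sin s))
    (h0 : u t₀ = 0) (h1 : u' t₀ = c) :
    u (t₀ + π / Ω) = 0 ∧ u' (t₀ + π / Ω) = -c := by
  have hπ : 0 < π := Real.pi_pos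
  have hb : t₀ < t₀ + π / Ω := by have := div_pos hπ hΩ; linarith
  set W : ℝ → ℝ × ℝ := fun t => ((c / Ω) * Real.sin (Ω * (t - t₀)), c * Real.cos (Ω * (t - t₀)))
    with hW
  set F : ℝ → ℝ × ℝ := fun t => (u t, u' t) with hF
  have key : EqOn F W (Icc t₀ (t₀ + π / Ω)) := by
    apply ODE_solution_unique (v := fun _ => oscF ω₀ ε)
      (fun _ => oscF_lipschitz ω₀ ε hω.le hε.le)
    · exact Continuous.continuousOn (continuous_iff_continuousAt.2 fun s =>
        (((hu s).prodMk (hu' s)).continuousAt))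
    · intro t _
      exact (((hu t).prodMk (hu' t))).hasDerivWithinAt
    · exact Continuous.continuousOn (by fun_prop)
    · intro t ht
      have hs0 : 0 ≤ Ω * (t - t₀) := by
        have := ht.1; nlinarith
      have hsπ : Ω * (t - t₀) < π := by
        have h2 := ht.2
        have : t - t₀ < π / Ω := by linarith
        calc Ω * (t - t₀) < Ω * (π / Ω) := by nlinarith
          _ = π := by field_simp
      have hf := hfield (Ω * (t - t₀)) ⟨hs0, hsπ⟩
      have : oscF ω₀ ε (W t) = (c * Real.cos (Ω * (t - t₀)), -(c * Ω) * Real.sin (Ω * (t - t₀))) := by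
        simp only [oscF, hW]
        refine Prod.ext rfl ?_
        simp only
        rw [hf]
        field_simp
      rw [this]
      exact (pair1_hasDeriv c Ω t₀ hΩ.ne' t).hasDerivWithinAt
    · simp [hF, hW, h0, h1]
  have hend := key (right_mem_Icc.2 hb.le)
  have harg : Ω * (t₀ + π / Ω - t₀) = π := by field_simp; ring
  rw [hF, hW] at hend
  simp only [harg, Real.sin_pi, Real.cos_pi, mul_zero, mul_neg_one] at hend
  exact ⟨congrArg Prod.fst hend, congrArg Prod.snd hend⟩

lemma exists_first_zero {w : ℝ → ℝ} (hw : Continuous w) {t₂ : ℝ} (h0 : 0 < w 0)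
    (ht₂ : 0 < t₂) (h2 : w t₂ < 0) :
    ∃ t₁, 0 < t₁ ∧ t₁ ≤ t₂ ∧ w t₁ = 0 ∧ ∀ s ∈ Ico (0:ℝ) t₁, 0 < w s := by
  set Z : Set ℝ := Icc 0 t₂ ∩ w ⁻¹' {0} with hZ
  have hZne : Z.Nonempty := by
    have := intermediate_value_Icc' ht₂.le hw.continuousOn (a := 0) (b := t₂)
      (Set.mem_Icc.2 ⟨h2.le, h0.le⟩)
    obtain ⟨r, hr, hr0⟩ := this
    exact ⟨r, hr, by simpa using hr0⟩
  have hZclosed : IsClosed Z := isClosed_Icc.inter (isClosed_singleton.preimage hw)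
  have hZbdd : BddBelow Z := ⟨0, fun x hx => hx.1.1⟩
  set t₁ := sInf Z with ht₁
  have hmem : t₁ ∈ Z := hZclosed.csInf_mem hZne hZbdd
  have hw1 : w t₁ = 0 := hmem.2
  have ht₁0 : 0 < t₁ := by
    rcases lt_or_eq_of_le hmem.1.1 with h | h
    · exact h
    · exfalso; rw [← h] at hw1; linarith
  refine ⟨t₁, ht₁0, hmem.1.2, hw1, ?_⟩
  intro s hs
  by_contra hneg
  push_neg at hneg
  rcases lt_or_eq_of_le hneg with h | h
  · obtain ⟨r, hr, hr0⟩ := intermediate_value_Icc' hs.1 hw.continuousOn (a := 0) (b := s)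
      (Set.mem_Icc.2 ⟨h.le, h0.le⟩)
    have hrZ : r ∈ Z := ⟨⟨hr.1, le_trans hr.2 (le_trans hs.2.le hmem.1.2)⟩, by simpa using hr0⟩
    have := csInf_le hZbdd hrZ
    have : t₁ ≤ s := le_trans this hr.2
    exact absurd hs.2 (not_lt.2 this)
  · have hsZ : s ∈ Z := ⟨⟨hs.1, le_trans hs.2.le hmem.1.2⟩, by simp [← h]⟩
    have := csInf_le hZbdd hsZ
    exact absurd hs.2 (not_lt.2 this)

lemma osc_exists_zero (ω₀ ε : ℝ) (hω : 0 < ω₀) (hε : 0 < ε) (u u' : ℝ → ℝ)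
    (hu : ∀ t, HasDerivAt u (u' t) t)
    (hu' : ∀ t, HasDerivAt u' (-(ω₀ ^ 2 * u t + ε * max (u t) 0)) t)
    (Ω : ℝ) (hΩ : 0 < Ω)
    (hfield : ∀ x : ℝ, 0 ≤ x * u 0 → ω₀ ^ 2 * x + ε * max x 0 = Ω ^ 2 * x)
    (hne : u 0 ≠ 0) :
    ∃ t₀, u t₀ = 0 := by
  have hπ : 0 < π := Real.pi_pos
  set a := u 0 with ha
  set b := u' 0 with hb2
  set w : ℝ → ℝ := fun t => a * Real.cos (Ω * t) + (b / Ω) * Real.sin (Ω * t) with hwdef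
  set w' : ℝ → ℝ := fun t => -(a * Ω) * Real.sin (Ω * t) + b * Real.cos (Ω * t) with hw'def
  have hwc : Continuous w := by fun_prop
  have hw0 : w 0 = a := by simp [hwdef]
  have hwτ : w (π / Ω) = -a := by
    have : Ω * (π / Ω) = π := by field_simp
    simp [hwdef, this]
  have hτpos : 0 < π / Ω := div_pos hπ hΩ
  -- find first zero t₁ of w, with w having the sign of a on [0, t₁)
  obtain ⟨t₁, ht₁0, _, hwt₁, hsign⟩ :
      ∃ t₁, 0 < t₁ ∧ t₁ ≤ π / Ω ∧ w t₁ = 0 ∧ ∀ s ∈ Ico (0:ℝ) t₁, 0 < w s * a := by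
    rcases hne.lt_or_gt with hneg | hpos
    · have h0' : 0 < (-w) 0 := by simp [hw0]; linarith
      have h2' : (-w) (π / Ω) < 0 := by simp [hwτ]; linarith
      obtain ⟨t₁, p1, p2, p3, p4⟩ := exists_first_zero (hwc.neg) h0' hτpos h2'
      refine ⟨t₁, p1, p2, by simpa using p3, fun s hs => ?_⟩
      have := p4 s hs
      simp only [Pi.neg_apply] at this
      nlinarith
    · obtain ⟨t₁, p1, p2, p3, p4⟩ := exists_first_zero (w := w) hwc
        (by rw [hw0]; exact hpos) hτpos (by rw [hwτ]; linarith)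
      refine ⟨t₁, p1, p2, p3, fun s hs => ?_⟩
      have := p4 s hs
      nlinarith
  -- uniqueness on [0, t₁]
  set W : ℝ → ℝ × ℝ := fun t => (w t, w' t) with hW
  set F : ℝ → ℝ × ℝ := fun t => (u t, u' t) with hF
  have key : EqOn F W (Icc 0 t₁) := by
    apply ODE_solution_unique (v := fun _ => oscF ω₀ ε)
      (fun _ => oscF_lipschitz ω₀ ε hω.le hε.le)
    · exact Continuous.continuousOn (continuous_iff_continuousAt.2 fun s =>
        (((hu s).prodMk (hu' s)).continuousAt))
    · intro t _
      exact (((hu t).prodMk (hu' t))).hasDerivWithinAt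
    · exact Continuous.continuousOn (by fun_prop)
    · intro t ht
      have hf := hfield (w t) (le_of_lt (hsign t ht))
      have heq : oscF ω₀ ε (W t) = (w' t, -(Ω ^ 2) * w t) := by
        simp only [oscF, hW]
        refine Prod.ext rfl ?_
        simp only
        rw [hf]
        ring
      rw [heq]
      exact (pair2_hasDeriv a b Ω hΩ.ne' t).hasDerivWithinAt
    · simp [hF, hW, hwdef, hw'def, ha, hb2]
  refine ⟨t₁, ?_⟩
  have hkey := key (right_mem_Icc.2 ht₁0.le)
  have : u t₁ = w t₁ := congrArg Prod.fst hkey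
  rw [this, hwt₁]

/-- Every nontrivial solution of ü + ω₀²u + ε·u_+ = 0 is periodic with period
P(ε) = (π/ω₀)·(1 + (1 + ε/ω₀²)^{-1/2}). -/
theorem piecewise_oscillator_periodic (ω₀ ε : ℝ) (hω : 0 < ω₀) (hε : 0 < ε)
    (u u' : ℝ → ℝ)
    (hu : ∀ t, HasDerivAt u (u' t) t)
    (hu' : ∀ t, HasDerivAt u' (-(ω₀ ^ 2 * u t + ε * max (u t) 0)) t)
    (hnz : (u 0, u' 0) ≠ (0, 0)) :
    Function.Periodic u ((π / ω₀) * (1 + 1 / Real.sqrt (1 + ε / ω₀ ^ 2))) := by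
  have hπ : 0 < π := Real.pi_pos
  have hpos : (0:ℝ) < ω₀ ^ 2 + ε := by positivity
  set ω₁ := Real.sqrt (ω₀ ^ 2 + ε) with hω₁def
  have hω₁ : 0 < ω₁ := Real.sqrt_pos.2 hpos
  have hsq : ω₁ ^ 2 = ω₀ ^ 2 + ε := Real.sq_sqrt hpos.le
  have hP : (π / ω₀) * (1 + 1 / Real.sqrt (1 + ε / ω₀ ^ 2)) = π / ω₁ + π / ω₀ := by
    have h1 : (1 + ε / ω₀ ^ 2) = (ω₀ ^ 2 + ε) / ω₀ ^ 2 := by field_simp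
    have h2 : Real.sqrt (1 + ε / ω₀ ^ 2) = ω₁ / ω₀ := by
      rw [h1, Real.sqrt_div hpos.le, Real.sqrt_sq hω.le, hω₁def]
    rw [h2]
    field_simp
    ring
  rw [hP]
  obtain ⟨t₀, ht₀⟩ : ∃ t₀, u t₀ = 0 := by
    by_cases h : u 0 = 0
    · exact ⟨0, h⟩
    · rcases (lt_or_gt_of_ne h) with hlt | hgt
      · refine osc_exists_zero ω₀ ε hω hε u u' hu hu' ω₀ hω (fun x hx => ?_) h
        have hx0 : x ≤ 0 := by nlinarith
        rw [max_eq_right hx0]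
        ring
      · refine osc_exists_zero ω₀ ε hω hε u u' hu hu' ω₁ hω₁ (fun x hx => ?_) h
        have hx0 : 0 ≤ x := by nlinarith
        rw [max_eq_left hx0, hsq]
        ring
  have hstepA : ∀ s c, 0 ≤ c → u s = 0 → u' s = c →
      u (s + π / ω₁) = 0 ∧ u' (s + π / ω₁) = -c := by
    intro s c hc h0 h1
    refine osc_step ω₀ ε hω hε u u' hu hu' s c ω₁ hω₁ (fun x hx => ?_) h0 h1
    have hsin : 0 ≤ Real.sin x := Real.sin_nonneg_of_nonneg_of_le_pi hx.1 hx.2.le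
    have hX : 0 ≤ (c / ω₁) * Real.sin x := by positivity
    rw [max_eq_left hX, hsq]
    ring
  have hstepB : ∀ s c, c ≤ 0 → u s = 0 → u' s = c →
      u (s + π / ω₀) = 0 ∧ u' (s + π / ω₀) = -c := by
    intro s c hc h0 h1
    refine osc_step ω₀ ε hω hε u u' hu hu' s c ω₀ hω (fun x hx => ?_) h0 h1
    have hsin : 0 ≤ Real.sin x := Real.sin_nonneg_of_nonneg_of_le_pi hx.1 hx.2.le
    have hX : (c / ω₀) * Real.sin x ≤ 0 :=
      mul_nonpos_of_nonpos_of_nonneg (div_nonpos_of_nonpos_of_nonneg hc hω.le) hsin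
    rw [max_eq_right hX]
    ring
  set P := π / ω₁ + π / ω₀ with hPd
  set c := u' t₀ with hc
  have hper : u (t₀ + P) = 0 ∧ u' (t₀ + P) = c := by
    rcases le_total 0 c with hcpos | hcneg
    · obtain ⟨a1, a2⟩ := hstepA t₀ c hcpos ht₀ rfl
      obtain ⟨b1, b2⟩ := hstepB (t₀ + π / ω₁) (-c) (by linarith) a1 a2
      have hl : t₀ + P = t₀ + π / ω₁ + π / ω₀ := by rw [hPd]; ring
      rw [hl]
      exact ⟨b1, by rw [b2]; ring⟩
    · obtain ⟨a1, a2⟩ := hstepB t₀ c hcneg ht₀ rfl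
      obtain ⟨b1, b2⟩ := hstepA (t₀ + π / ω₀) (-c) (by linarith) a1 a2
      have hl : t₀ + P = t₀ + π / ω₀ + π / ω₁ := by rw [hPd]; ring
      rw [hl]
      exact ⟨b1, by rw [b2]; ring⟩
  intro t
  have hf : ∀ s, HasDerivAt (fun t => (u t, u' t)) (oscF ω₀ ε (u s, u' s)) s :=
    fun s => (hu s).prodMk (hu' s)
  have hg : ∀ s, HasDerivAt (fun t => (u (t + P), u' (t + P)))
      (oscF ω₀ ε (u (s + P), u' (s + P))) s := by
    intro s
    have h1 : HasDerivAt (fun t => u (t + P)) (u' (s + P)) s :=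
      HasDerivAt.comp_add_const s P (hu (s + P))
    have h2 : HasDerivAt (fun t => u' (t + P))
        (-(ω₀ ^ 2 * u (s + P) + ε * max (u (s + P)) 0)) s :=
      HasDerivAt.comp_add_const s P (hu' (s + P))
    exact h1.prodMk h2
  have heq0 : (fun t => (u t, u' t)) t₀ = (fun t => (u (t + P), u' (t + P))) t₀ := by
    simp only
    rw [hper.1, hper.2, ht₀]
  have hkey := ode_global_eq (oscF_lipschitz ω₀ ε hω.le hε.le) hf hg heq0 t
  exact (congrArg Prod.fst hkey).symm
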